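/- Let μ > 0 and let N be an even integer with N > 2μ. Then every entry of the inverse of T_N(μ) satisfies |(T_N(μ)⁻¹)_{i,l}| ≤ √2/μ for all 1 ≤ i, l ≤ N. -/
import Mathlib

set_option maxHeartbeats 1000000

/-- Downward induction from `M`. -/
lemma downInd (P : ℕ → Prop) (M : ℕ) (base : P M)
    (step : ∀ j, j < M → P (j+1) → P j) : ∀ j, j ≤ M → P j := by
  have h : ∀ m, m ≤ M → P (M - m) := by
    intro m
    induction m with
    | zero => intro _; simpa using base
    | succ k ih =>
      intro hk
      have h1 : P (M - k) := ih (by omega)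
      have h2 : M - (k+1) + 1 = M - k := by omega
      exact step _ (by omega) (by rw [h2]; exact h1)
  intro j hj
  have := h (M - j) (by omega)
  rwa [show M - (M - j) = j by omega] at this

lemma absSplit (a b : ℝ) (h : a * b ≤ 0) : |a - b| = |a| + |b| := by
  rcases le_total 0 a with ha | ha <;> rcases le_total 0 b with hb | hb
  · have hab : a = 0 ∨ b = 0 := by
      rcases mul_nonneg ha hb |>.lt_or_eq with h' | h'
      · exact absurd h (not_le.mpr h')
      · rcases mul_eq_zero.mp h'.symm with h'' | h'' <;> [left; right] <;> exact h''
    rcases hab with h' | h' <;> subst h' <;> simp [abs_of_nonneg, ha, hb]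
  · rw [abs_of_nonneg ha, abs_of_nonpos hb, abs_of_nonneg (by linarith)]
    ring
  · rw [abs_of_nonpos ha, abs_of_nonneg hb, abs_of_nonpos (by linarith)]
    ring
  · have hab : a = 0 ∨ b = 0 := by
      rcases (mul_nonneg (neg_nonneg.mpr ha) (neg_nonneg.mpr hb)).lt_or_eq with h' | h'
      · nlinarith
      · have : a * b = 0 := by nlinarith
        rcases mul_eq_zero.mp this with h'' | h'' <;> [left; right] <;> exact h''
    rcases hab with h' | h' <;> subst h' <;> simp [abs_of_nonpos, ha, hb]

lemma keyK1 (L μ s : ℝ) (hL : 0 ≤ L) (hμ : 0 < μ) (hs1 : 1 ≤ s) :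
    ((2*L+4)*(μ+L+2) + μ^2) * μ
      ≤ s * (μ^2*(μ+L+2) + (2*L+2) * ((2*L+4)*(μ+L+2) + μ^2)) := by
  set d : ℝ := 2*L+2 with hd
  set p : ℝ := L+2 with hp
  have hdpos : 0 < d := by rw [hd]; linarith
  have hppos : 0 < p := by rw [hp]; linarith
  set D : ℝ := 2*p*(μ+p) + μ^2 with hD
  set Q : ℝ := 2*d*(μ+d) + μ^2 with hQ
  have hDpos : 0 < D := by rw [hD]; nlinarith
  have hQpos : 0 < Q := by rw [hQ]; nlinarith
  have hgoal : ((2*L+4)*(μ+L+2) + μ^2) * μ = D * μ := by rw [hD, hp]; ring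
  have hgoal2 : s * (μ^2*(μ+L+2) + (2*L+2) * ((2*L+4)*(μ+L+2) + μ^2))
      = s*μ^2*(μ+p) + s*d*D := by rw [hD, hp, hd]; ring
  rw [hgoal, hgoal2]
  have hsuff : D * (μ - s*d) ≤ s*μ^2*(μ+p) → D*μ ≤ s*μ^2*(μ+p) + s*d*D := by
    intro h; nlinarith [h]
  apply hsuff
  rcases le_or_gt μ (s*d) with hcase | hcase
  · have h1 : D * (μ - s*d) ≤ 0 := mul_nonpos_of_nonneg_of_nonpos hDpos.le (by linarith)
    have h2 : 0 ≤ s*μ^2*(μ+p) := by positivity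
    linarith
  · have hA : D*(μ+d) ≤ Q*(μ+p) := by
      have key : Q*(μ+p) - D*(μ+d) = (d-p)*(2*(μ+d)*(μ+p) - μ^2) := by
        rw [hD, hQ]; ring
      have h1 : 0 ≤ d - p := by rw [hd, hp]; linarith
      have h2 : 0 ≤ 2*(μ+d)*(μ+p) - μ^2 := by nlinarith
      nlinarith [mul_nonneg h1 h2]
    have hB : Q*(μ - s*d) ≤ s*μ^2*(μ+d) := by
      have expand : s*μ^2*(μ+d) - Q*(μ - s*d)
          = (s-1)*μ^3 + (2*s-2)*d*μ^2 + (2*s-2)*d^2*μ + 2*s*d^3 := by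
        rw [hQ]; ring
      have h1 : 0 ≤ (s-1)*μ^3 := by
        apply mul_nonneg (by linarith) (by positivity)
      have h2 : 0 ≤ (2*s-2)*d*μ^2 := by
        apply mul_nonneg (mul_nonneg (by linarith) hdpos.le) (by positivity)
      have h3 : 0 ≤ (2*s-2)*d^2*μ := by
        apply mul_nonneg (mul_nonneg (by linarith) (by positivity)) hμ.le
      have h4 : 0 ≤ 2*s*d^3 := by
        apply mul_nonneg (by linarith) (by positivity)
      linarith
    have e1 : D*(μ+d)*(μ-s*d) ≤ Q*(μ+p)*(μ-s*d) :=
      mul_le_mul_of_nonneg_right hA (by linarith)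
    have e2 : Q*(μ-s*d)*(μ+p) ≤ s*μ^2*(μ+d)*(μ+p) :=
      mul_le_mul_of_nonneg_right hB (by positivity)
    have e3 : (D*(μ-s*d))*(μ+d) ≤ (s*μ^2*(μ+p))*(μ+d) := by nlinarith [e1, e2]
    exact le_of_mul_le_mul_right e3 (by positivity)

lemma keyLemma (μ : ℝ) (hμ : 0 < μ) (N l : ℕ) (hl : l < N) (hN : 2*μ < (N:ℝ))
    (U : ℕ → ℝ) (hU0 : U 0 = 0) (hUbig : ∀ n, N < n → U n = 0)
    (hrow : ∀ j, j < N →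
      μ * U j + (2*(j:ℝ)+2) * U (j+1) - μ * U (j+2) = if j = l then 1 else 0) :
    ∀ i, i ≤ N → |U i| ≤ Real.sqrt 2 / μ := by
  -- energy identity
  have henergy : ∑ j ∈ Finset.range N, (2*(j:ℝ)+2) * (U (j+1))^2 = U (l+1) := by
    have h1 : ∀ j ∈ Finset.range N,
        (2*(j:ℝ)+2) * (U (j+1))^2
          = U (j+1) * (if j = l then (1:ℝ) else 0)
            - μ * (U j * U (j+1) - U (j+1) * U (j+2)) := by
      intro j hj
      rw [← hrow j (Finset.mem_range.mp hj)]
      ring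
    rw [Finset.sum_congr rfl h1, Finset.sum_sub_distrib, ← Finset.mul_sum]
    have h2 : ∑ j ∈ Finset.range N, U (j+1) * (if j = l then (1:ℝ) else 0) = U (l+1) := by
      rw [Finset.sum_eq_single l]
      · simp
      · intro b _ hb; simp [hb]
      · intro h; exact absurd (Finset.mem_range.mpr hl) h
    have h3 : ∑ j ∈ Finset.range N, (U j * U (j+1) - U (j+1) * U (j+2)) = 0 := by
      have : ∀ j, U j * U (j+1) - U (j+1) * U (j+2)
          = (fun n => U n * U (n+1)) j - (fun n => U n * U (n+1)) (j+1) := by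
        intro j; ring
      rw [Finset.sum_congr rfl (fun j _ => this j), Finset.sum_range_sub']
      simp [hU0, hUbig (N+1) (by omega)]
    rw [h2, h3, mul_zero, sub_zero]
  have hterms : ∀ j ∈ Finset.range N, (0:ℝ) ≤ (2*(j:ℝ)+2) * (U (j+1))^2 := by
    intro j _; positivity
  have hq : 0 < U (l+1) := by
    rcases lt_or_ge 0 (U (l+1)) with h | h
    · exact h
    · exfalso
      have hsum0 : ∑ j ∈ Finset.range N, (2*(j:ℝ)+2) * (U (j+1))^2 = 0 :=
        le_antisymm (henergy ▸ h) (Finset.sum_nonneg hterms)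
      have hz : ∀ j ∈ Finset.range N, (2*(j:ℝ)+2) * (U (j+1))^2 = 0 :=
        (Finset.sum_eq_zero_iff_of_nonneg hterms).mp hsum0
      have hzero : ∀ j, j ≤ N + 1 → U j = 0 := by
        intro j hj
        match j with
        | 0 => exact hU0
        | (k+1) =>
          rcases lt_or_ge k N with hk | hk
          · have := hz k (Finset.mem_range.mpr hk)
            have h2 : (U (k+1))^2 = 0 := by
              have hpos : (0:ℝ) < 2*(k:ℝ)+2 := by positivity
              exact by nlinarith [sq_nonneg (U (k+1))]
            exact pow_eq_zero_iff (n := 2) (by norm_num) |>.mp h2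
          · exact hUbig (k+1) (by omega)
      have := hrow l hl
      rw [hzero l (by omega), hzero (l+1) (by omega), hzero (l+2) (by omega)] at this
      simp at this
  -- sign alternation above l
  have hE : ∀ j, j ≤ N - 1 → l ≤ j → U (j+1) * U (j+2) ≤ 0 := by
    apply downInd (fun j => l ≤ j → U (j+1) * U (j+2) ≤ 0)
    · intro _
      have : U (N-1+2) = 0 := hUbig _ (by omega)
      rw [this, mul_zero]
    · intro j hj ih hlj
      have hrj : μ * U (j+1) + (2*((j+1:ℕ):ℝ)+2) * U (j+2) - μ * U (j+3) = 0 := by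
        have := hrow (j+1) (by omega)
        rwa [if_neg (by omega)] at this
      have hih : U (j+2) * U (j+3) ≤ 0 := ih (by omega)
      push_cast at hrj
      have h4 : μ * (U (j+1) * U (j+2))
          = μ * (U (j+2) * U (j+3)) - (2*(j:ℝ)+4) * U (j+2)^2 := by
        linear_combination U (j+2) * hrj
      have h5 : μ * (U (j+1) * U (j+2)) ≤ 0 := by nlinarith [hih, sq_nonneg (U (j+2)), hμ.le]
      by_contra hc
      push_neg at hc
      nlinarith [h5, hμ]
  -- |·| recursion above l
  have hW : ∀ j, l+1 ≤ j → j < N →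
      μ * |U j| = μ * |U (j+2)| + (2*(j:ℝ)+2) * |U (j+1)| := by
    intro j hlj hjN
    have hrj : μ * U j = μ * U (j+2) - (2*(j:ℝ)+2) * U (j+1) := by
      have := hrow j hjN
      rw [if_neg (by omega)] at this
      linarith
    have hEj : U j * U (j+1) ≤ 0 := by
      rcases Nat.exists_eq_add_of_le hlj with ⟨k, rfl⟩
      have := hE (l + k) (by omega) (by omega)
      convert this using 3 <;> omega
    have hsg : (μ * U (j+2)) * ((2*(j:ℝ)+2) * U (j+1)) ≤ 0 := by
      have hEj2 : U (j+1) * U (j+2) ≤ 0 := by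
        rcases Nat.lt_or_ge j (N-1) with h | h
        · exact hE j (by omega) (by omega)
        · have : U (j+2) = 0 := hUbig _ (by omega)
          rw [this, mul_zero]
      have hc : (0:ℝ) ≤ μ*(2*(j:ℝ)+2) := by positivity
      nlinarith [hc, hEj2]
    calc μ * |U j| = |μ * U j| := by rw [abs_mul, abs_of_pos hμ]
    _ = |μ * U (j+2) - (2*(j:ℝ)+2) * U (j+1)| := by rw [hrj]
    _ = |μ * U (j+2)| + |(2*(j:ℝ)+2) * U (j+1)| := absSplit _ _ hsg
    _ = μ * |U (j+2)| + (2*(j:ℝ)+2) * |U (j+1)| := by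
        rw [abs_mul, abs_mul, abs_of_pos hμ, abs_of_pos (by positivity : (0:ℝ) < 2*(j:ℝ)+2)]
  -- bottom nonnegativity
  have hBotCase : ∀ (σ : ℝ), σ = 1 ∨ σ = -1 → 0 ≤ σ * U 1 → ∀ j, j ≤ l+1 → 0 ≤ σ * U j := by
    intro σ hσ h1
    intro j
    induction j using Nat.strong_induction_on with
    | _ j ih =>
      intro hj
      match j with
      | 0 => simp [hU0]
      | 1 => exact h1
      | (k+2) =>
        have hrk : μ * U k + (2*(k:ℝ)+2) * U (k+1) - μ * U (k+2) = 0 := by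
          have := hrow k (by omega)
          rwa [if_neg (by omega)] at this
        have i1 := ih k (by omega) (by omega)
        have i2 := ih (k+1) (by omega) (by omega)
        have hσ2 : σ^2 = 1 := by rcases hσ with h | h <;> rw [h] <;> norm_num
        have h4 : μ * (σ * U (k+2)) = μ*(σ*U k) + (2*(k:ℝ)+2)*(σ*U (k+1)) := by
          linear_combination (-σ) * hrk
        have h5 : 0 ≤ μ * (σ * U (k+2)) := by nlinarith [i1, i2, hμ.le]
        by_contra hc2
        push_neg at hc2
        nlinarith [h5, hμ]
  have hBotNonneg : ∀ j, j ≤ l+1 → 0 ≤ U j := by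
    rcases le_total 0 (U 1) with h1 | h1
    · have := hBotCase 1 (Or.inl rfl) (by simpa using h1)
      intro j hj; simpa using this j hj
    · have := hBotCase (-1) (Or.inr rfl) (by simpa using h1)
      exfalso
      have := this (l+1) (le_refl _)
      simp at this
      linarith
  set s := Real.sqrt 2 with hs
  have hs2 : s^2 = 2 := Real.sq_sqrt (by norm_num)
  have hs1 : 1 ≤ s := by
    rw [hs, show (1:ℝ) = Real.sqrt 1 by simp]
    exact Real.sqrt_le_sqrt (by norm_num)
  -- consequences of row l
  have hUl2 : U (l+2) ≤ 0 := by
    have h := hE l (by omega) le_rfl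
    nlinarith [hq]
  have hrl : μ * U l + (2*(l:ℝ)+2) * U (l+1) + μ * |U (l+2)| = 1 := by
    have := hrow l hl
    rw [if_pos rfl] at this
    rw [abs_of_nonpos hUl2]
    linarith
  have hUlle : U l ≤ 1/μ := by
    have h0 : 0 ≤ U l := hBotNonneg l (by omega)
    have h2 : 0 ≤ (2*(l:ℝ)+2) * U (l+1) := by positivity
    have h3 : 0 ≤ μ * |U (l+2)| := by positivity
    rw [le_div_iff₀ hμ]
    nlinarith
  have hWl2 : μ * |U (l+2)| ≤ 1 - (2*(l:ℝ)+2) * U (l+1) := by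
    have h0 : 0 ≤ U l := hBotNonneg l (by omega)
    nlinarith [hrl]
  -- the band (downward induction)
  have hband : ∀ j, j ≤ N - 1 → l+1 ≤ j →
      (μ*(μ + (j:ℝ)+1)) * |U j| ≤ ((2*(j:ℝ)+2)*(μ+(j:ℝ)+1) + μ^2) * |U (j+1)|
      ∧ (μ + (j:ℝ)) * |U (j+1)| ≤ μ * |U j| := by
    apply downInd (fun j => l+1 ≤ j →
      (μ*(μ + (j:ℝ)+1)) * |U j| ≤ ((2*(j:ℝ)+2)*(μ+(j:ℝ)+1) + μ^2) * |U (j+1)|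
      ∧ (μ + (j:ℝ)) * |U (j+1)| ≤ μ * |U j|)
    · intro hlN
      -- base case j = N-1
      have hc : ((N-1:ℕ):ℝ) = (N:ℝ) - 1 := by
        have h1 : (1:ℕ) ≤ N := by omega
        push_cast [Nat.cast_sub h1]
        ring
      have hwrec := hW (N-1) hlN (by omega)
      have hz : U (N-1+2) = 0 := hUbig _ (by omega)
      rw [hz] at hwrec
      simp only [abs_zero, mul_zero, zero_add] at hwrec
      rw [hc] at hwrec ⊢
      have h1 : 0 ≤ |U (N-1+1)| := abs_nonneg _
      constructor
      · have e1 : μ*(μ+((N:ℝ)-1)+1)*|U (N-1)|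
            = (2*((N:ℝ)-1)+2)*(μ+((N:ℝ)-1)+1)*|U (N-1+1)| := by
          linear_combination (μ+(N:ℝ)) * hwrec
        have e2 : 0 ≤ μ^2 * |U (N-1+1)| := mul_nonneg (sq_nonneg μ) h1
        linarith
      · have e0 : μ + ((N:ℝ)-1) ≤ 2*((N:ℝ)-1)+2 := by linarith
        have e1 := mul_le_mul_of_nonneg_right e0 h1
        linarith
    · intro j hj ih hlj
      have hA := (ih (by omega)).1
      have hB := (ih (by omega)).2
      have hwrec := hW j hlj (by omega)
      push_cast at hA hB
      simp only [show j+1+1 = j+2 from rfl] at hA hB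
      have habs0 : 0 ≤ |U (j+1)| := abs_nonneg _
      have habs2 : 0 ≤ |U (j+2)| := abs_nonneg _
      constructor
      · -- upper bound from lower bound at j+1
        have e1 : μ*(μ+(j:ℝ)+1)*|U j|
            = μ*((μ+(j:ℝ)+1)*|U (j+2)|) + (2*(j:ℝ)+2)*(μ+(j:ℝ)+1)*|U (j+1)| := by
          linear_combination (μ+(j:ℝ)+1) * hwrec
        have e2 : μ*((μ+(j:ℝ)+1)*|U (j+2)|) ≤ μ*(μ*|U (j+1)|) :=
          mul_le_mul_of_nonneg_left (by linarith [hB]) hμ.le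
        linarith [e1, e2]
      · -- lower bound from upper bound at j+1, uses the cubic slack
        have hD : (0:ℝ) < (2*(j:ℝ)+4)*(μ+(j:ℝ)+2) + μ^2 := by positivity
        have hp : (0:ℝ) ≤ 2*((j:ℝ)+2)^3 := by positivity
        have hK2 : ((μ:ℝ) + (j:ℝ)) * ((2*(j:ℝ)+4)*(μ+(j:ℝ)+2) + μ^2)
            ≤ μ^2*(μ+(j:ℝ)+2) + (2*(j:ℝ)+2) * ((2*(j:ℝ)+4)*(μ+(j:ℝ)+2) + μ^2) := by
          nlinarith [hp]
        have e1 : μ*|U j| * ((2*(j:ℝ)+4)*(μ+(j:ℝ)+2) + μ^2)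
            = μ*|U (j+2)| * ((2*(j:ℝ)+4)*(μ+(j:ℝ)+2) + μ^2)
              + (2*(j:ℝ)+2)*|U (j+1)| * ((2*(j:ℝ)+4)*(μ+(j:ℝ)+2) + μ^2) := by
          linear_combination ((2*(j:ℝ)+4)*(μ+(j:ℝ)+2) + μ^2) * hwrec
        have e2 : μ*(μ*(μ+(j:ℝ)+2) * |U (j+1)|)
            ≤ μ*(((2*(j:ℝ)+4)*(μ+(j:ℝ)+2) + μ^2) * |U (j+2)|) :=
          mul_le_mul_of_nonneg_left (by linarith [hA]) hμ.le
        have e3 := mul_le_mul_of_nonneg_right hK2 habs0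
        have e4 : ((μ + (j:ℝ)) * |U (j+1)|) * ((2*(j:ℝ)+4)*(μ+(j:ℝ)+2) + μ^2)
            ≤ (μ * |U j|) * ((2*(j:ℝ)+4)*(μ+(j:ℝ)+2) + μ^2) := by linarith [e1, e2, e3]
        exact le_of_mul_le_mul_right e4 hD
  -- decrease of |U| above l with step 2
  have hTopDec : ∀ j, l+1 ≤ j → j < N → |U (j+2)| ≤ |U j| := by
    intro j h1 h2
    have := hW j h1 h2
    nlinarith [abs_nonneg (U (j+1)), hμ, this]
  -- everything above l bounded by max of the two leaders
  have hTopMax : ∀ i, l+1 ≤ i → |U i| ≤ max (|U (l+1)|) (|U (l+2)|) := by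
    intro i
    induction i using Nat.strong_induction_on with
    | _ i ih =>
      intro hi
      rcases Nat.lt_or_ge i (l+3) with h3 | h3
      · rcases Nat.lt_or_ge i (l+2) with h2 | h2
        · have : i = l+1 := by omega
          rw [this]; exact le_max_left _ _
        · have : i = l+2 := by omega
          rw [this]; exact le_max_right _ _
      · rcases Nat.lt_or_ge (N+1) i with hbig | hsmall
        · have : U i = 0 := hUbig i (by omega)
          rw [this, abs_zero]
          exact le_trans (abs_nonneg _) (le_max_left _ _)
        · have hdec := hTopDec (i-2) (by omega) (by omega)
          have e : i - 2 + 2 = i := by omega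
          rw [e] at hdec
          exact le_trans hdec (ih (i-2) (by omega) (by omega))
  -- everything below l bounded by max (U l) (U (l+1))
  have hBotMax : ∀ i, i ≤ l+1 → U i ≤ max (U l) (U (l+1)) := by
    have haux : ∀ m, ∀ i, i + m = l + 1 → U i ≤ max (U l) (U (l+1)) := by
      intro m
      induction m using Nat.strong_induction_on with
      | _ m ih =>
        intro i hi
        match m, hi with
        | 0, hi =>
          have : i = l+1 := by omega
          rw [this]; exact le_max_right _ _
        | 1, hi =>
          have : i = l := by omega
          rw [this]; exact le_max_left _ _
        | (k+2), hi =>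
          have hrow_i : μ * U i + (2*(i:ℝ)+2) * U (i+1) - μ * U (i+2) = 0 := by
            have := hrow i (by omega)
            rwa [if_neg (by omega)] at this
          have hnn : 0 ≤ U (i+1) := hBotNonneg (i+1) (by omega)
          have hstep : U i ≤ U (i+2) := by nlinarith [hμ, hnn, hrow_i]
          exact le_trans hstep (ih k (by omega) (i+2) (by omega))
    intro i hi
    exact haux (l+1-i) i (by omega)
  -- the diagonal bound
  have hdiag : U (l+1) ≤ s/μ := by
    rw [le_div_iff₀ hμ]
    rcases Nat.lt_or_ge (l+1) N with hln | hln
    · have hA := (hband (l+1) (by omega) le_rfl).1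
      push_cast at hA
      simp only [show l+1+1 = l+2 from rfl] at hA
      rw [abs_of_pos hq] at hA
      set L := (l:ℝ) with hL
      have hLnn : (0:ℝ) ≤ L := by rw [hL]; positivity
      -- hA : μ*(μ+(L+1)+1) * U (l+1) ≤ ((2*(L+1)+2)*(μ+(L+1)+1)+μ^2) * |U (l+2)|
      have hA' : μ*(μ+L+2) * U (l+1) ≤ ((2*L+4)*(μ+L+2)+μ^2) * |U (l+2)| := by
        nlinarith [hA]
      have hD : (0:ℝ) < (2*L+4)*(μ+L+2) + μ^2 := by positivity
      have e1 : μ*(μ*(μ+L+2) * U (l+1)) ≤ μ*(((2*L+4)*(μ+L+2)+μ^2) * |U (l+2)|) :=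
        mul_le_mul_of_nonneg_left hA' hμ.le
      have e2 : ((2*L+4)*(μ+L+2)+μ^2) * (μ * |U (l+2)|)
          ≤ ((2*L+4)*(μ+L+2)+μ^2) * (1 - (2*L+2) * U (l+1)) :=
        mul_le_mul_of_nonneg_left hWl2 hD.le
      -- so E * U (l+1) ≤ D with E := μ²(μ+L+2) + (2L+2)D
      have hEpos : (0:ℝ) < μ^2*(μ+L+2) + (2*L+2)*((2*L+4)*(μ+L+2)+μ^2) := by positivity
      have e3 : (μ^2*(μ+L+2) + (2*L+2)*((2*L+4)*(μ+L+2)+μ^2)) * U (l+1)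
          ≤ (2*L+4)*(μ+L+2)+μ^2 := by nlinarith [e1, e2]
      have hK1 := keyK1 L μ s hLnn hμ hs1
      -- (U(l+1)*μ) * E ≤ D*μ ≤ s*E
      have e4 : (U (l+1) * μ) * (μ^2*(μ+L+2) + (2*L+2)*((2*L+4)*(μ+L+2)+μ^2))
          ≤ s * (μ^2*(μ+L+2) + (2*L+2)*((2*L+4)*(μ+L+2)+μ^2)) := by
        have e5 := mul_le_mul_of_nonneg_left e3 hμ.le
        nlinarith [e5, hK1]
      exact le_of_mul_le_mul_right e4 hEpos
    · -- l+1 = N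
      have hNl : (N:ℝ) = (l:ℝ) + 1 := by
        have : l + 1 = N := by omega
        rw [← this]; push_cast; ring
      have h1 : (2*(l:ℝ)+2) * U (l+1) ≤ 1 := by
        nlinarith [hWl2, abs_nonneg (U (l+2)), hμ]
      -- μ < N = l+1 so μ ≤ 2l+2 ≤ s(2l+2)
      have h2 : μ < (l:ℝ) + 1 := by rw [hNl] at hN; linarith
      have hLnn : (0:ℝ) ≤ (l:ℝ) := by positivity
      nlinarith [h1, hq, h2, hs1, hμ, mul_pos hq hμ]
  -- final assembly
  intro i hi
  have hfr : 1/μ ≤ s/μ := by gcongr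
  have hl2' : |U (l+2)| ≤ 1/μ := by
    rw [le_div_iff₀ hμ]
    nlinarith [hq, hWl2, hμ, mul_pos hq hμ]
  rcases Nat.lt_or_ge i (l+2) with hcase | hcase
  · have hnn := hBotNonneg i (by omega)
    rw [abs_of_nonneg hnn]
    refine le_trans (hBotMax i (by omega)) (max_le (le_trans hUlle hfr) hdiag)
  · refine le_trans (hTopMax i (by omega)) (max_le ?_ (le_trans hl2' hfr))
    rw [abs_of_pos hq]
    exact hdiag

open Matrix

/-- The `N × N` tridiagonal matrix `T_N(μ)` with diagonal `2, 4, …, 2N`, subdiagonal `μ`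
and superdiagonal `-μ` (0-based indexing). -/
noncomputable def Tmat (N : ℕ) (μ : ℝ) : Matrix (Fin N) (Fin N) ℝ :=
  Matrix.of fun i j =>
    if (i : ℕ) = (j : ℕ) then 2 * (((i : ℕ) : ℝ) + 1)
    else if (i : ℕ) = (j : ℕ) + 1 then μ
    else if (j : ℕ) = (i : ℕ) + 1 then -μ
    else 0

/-- Entrywise bound `|(T_N(μ)⁻¹)_{i,l}| ≤ √2/μ` for all even `N > 2μ`. -/
theorem stmt10 (μ : ℝ) (hμ : 0 < μ) (N : ℕ) (hNe : Even N) (hN : 2 * μ < (N : ℝ)) :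
    ∀ i l : Fin N, |(Tmat N μ)⁻¹ i l| ≤ Real.sqrt 2 / μ := by
  have hN' : 2*μ < (N:ℝ) := hN
  intro i l
  have hsym : Tmat N μ + (Tmat N μ)ᵀ
      = Matrix.diagonal (fun k : Fin N => 4*((k:ℕ):ℝ)+4) := by
    ext i j
    rcases eq_or_ne i j with rfl | hij
    · simp only [Matrix.add_apply, Matrix.transpose_apply, Tmat, Matrix.of_apply,
        Matrix.diagonal_apply_eq, eq_self_iff_true, if_true]
      ring
    · rw [Matrix.diagonal_apply_ne _ hij]
      have h : (i:ℕ) ≠ (j:ℕ) := fun hc => hij (Fin.ext hc)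
      simp only [Matrix.add_apply, Matrix.transpose_apply, Tmat, Matrix.of_apply]
      split_ifs
      all_goals (try (exfalso; omega))
      all_goals ring
  have hquad : ∀ u : Fin N → ℝ,
      u ⬝ᵥ (Tmat N μ).mulVec u = ∑ k : Fin N, (2*((k:ℕ):ℝ)+2) * (u k)^2 := by
    intro u
    have h1 : u ⬝ᵥ (Tmat N μ)ᵀ.mulVec u = u ⬝ᵥ (Tmat N μ).mulVec u := by
      rw [Matrix.mulVec_transpose, Matrix.dotProduct_mulVec, dotProduct_comm]
    have h2 : u ⬝ᵥ (Tmat N μ + (Tmat N μ)ᵀ).mulVec u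
        = 2 * (u ⬝ᵥ (Tmat N μ).mulVec u) := by
      rw [Matrix.add_mulVec, dotProduct_add, h1]
      ring
    rw [hsym] at h2
    have h3 : u ⬝ᵥ (Matrix.diagonal (fun k : Fin N => 4*((k:ℕ):ℝ)+4)).mulVec u
        = ∑ k : Fin N, (4*((k:ℕ):ℝ)+4) * (u k)^2 := by
      simp only [dotProduct, Matrix.mulVec_diagonal]
      apply Finset.sum_congr rfl
      intro k _
      ring
    rw [h3] at h2
    have h4 : ∑ k : Fin N, (4*((k:ℕ):ℝ)+4) * (u k)^2
        = 2 * ∑ k : Fin N, (2*((k:ℕ):ℝ)+2) * (u k)^2 := by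
      rw [Finset.mul_sum]
      apply Finset.sum_congr rfl
      intro k _
      ring
    rw [h4] at h2
    linarith
  have hdet : (Tmat N μ).det ≠ 0 := by
    intro h0
    obtain ⟨w, hw0, hww⟩ := (Matrix.exists_mulVec_eq_zero_iff).mpr h0
    have h1 : w ⬝ᵥ (Tmat N μ).mulVec w = 0 := by rw [hww, dotProduct_zero]
    rw [hquad w] at h1
    have hterms : ∀ k ∈ Finset.univ (α := Fin N), (0:ℝ) ≤ (2*((k:ℕ):ℝ)+2) * (w k)^2 := by
      intro k _; positivity
    have hz := (Finset.sum_eq_zero_iff_of_nonneg hterms).mp h1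
    apply hw0
    funext k
    have := hz k (Finset.mem_univ k)
    have hc : (0:ℝ) < 2*((k:ℕ):ℝ)+2 := by positivity
    have : (w k)^2 = 0 := by nlinarith [sq_nonneg (w k)]
    exact pow_eq_zero_iff (n := 2) (by norm_num) |>.mp this
  have hinv : Tmat N μ * (Tmat N μ)⁻¹ = 1 :=
    Matrix.mul_nonsing_inv _ (isUnit_iff_ne_zero.mpr hdet)
  set U : ℕ → ℝ := fun n =>
    if h : 1 ≤ n ∧ n ≤ N then (Tmat N μ)⁻¹ ⟨n-1, by omega⟩ l else 0 with hU
  have hU0 : U 0 = 0 := by rw [hU]; norm_num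
  have hUbig : ∀ n, N < n → U n = 0 := by
    intro n hn
    rw [hU]
    have : ¬ (1 ≤ n ∧ n ≤ N) := by omega
    simp only [this, dif_neg, not_false_iff]
  have hUval : ∀ k : Fin N, U ((k:ℕ)+1) = (Tmat N μ)⁻¹ k l := by
    intro k
    simp only [hU]
    rw [dif_pos (show 1 ≤ (k:ℕ)+1 ∧ (k:ℕ)+1 ≤ N by omega)]
    congr 1
  have hrowU : ∀ j, j < N →
      μ * U j + (2*(j:ℝ)+2) * U (j+1) - μ * U (j+2) = if j = (l:ℕ) then 1 else 0 := by
    intro j hj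
    have hmul : ∑ k : Fin N, Tmat N μ ⟨j, hj⟩ k * (Tmat N μ)⁻¹ k l
        = if j = (l:ℕ) then 1 else 0 := by
      have h1 := congrFun (congrFun hinv ⟨j, hj⟩) l
      rw [Matrix.mul_apply] at h1
      rw [h1, Matrix.one_apply]
      congr 1
      simp [Fin.ext_iff]
    have hpt : ∀ k : Fin N, Tmat N μ ⟨j, hj⟩ k * (Tmat N μ)⁻¹ k l
        = (fun n => (if n = j then ((2*(j:ℝ)+2) * U (j+1)) else 0)
          + (if n+1 = j then (μ * U j) else 0)
          + (if n = j+1 then (-μ * U (j+2)) else 0)) (k:ℕ) := by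
      intro k
      rw [← hUval k]
      simp only [Tmat, Matrix.of_apply]
      split_ifs
      all_goals try (exfalso; omega)
      all_goals first
        | ring1
        | (rw [show (k:ℕ) = j from by omega]; push_cast; ring1)
        | (rw [show (k:ℕ)+1 = j from by omega]; push_cast; ring1)
        | (rw [show (k:ℕ) = j+1 from by omega, show j+1+1 = j+2 from rfl];
           push_cast; ring1)
    rw [Finset.sum_congr rfl (fun k _ => hpt k)] at hmul
    rw [Fin.sum_univ_eq_sum_range
      (fun n => (if n = j then ((2*(j:ℝ)+2) * U (j+1)) else 0)
          + (if n+1 = j then (μ * U j) else 0)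
          + (if n = j+1 then (-μ * U (j+2)) else 0)) N] at hmul
    rw [Finset.sum_add_distrib, Finset.sum_add_distrib] at hmul
    rw [Finset.sum_ite_eq' (Finset.range N) j
      (fun _ => (2*(j:ℝ)+2) * U (j+1))] at hmul
    rw [if_pos (Finset.mem_range.mpr hj)] at hmul
    have hB : ∑ n ∈ Finset.range N, (if n+1 = j then (μ * U j) else 0) = μ * U j := by
      match j, hj with
      | 0, hj =>
        rw [Finset.sum_eq_zero (fun n _ => by rw [if_neg (by omega)])]
        rw [hU0]; ring
      | (m+1), hj =>
        rw [Finset.sum_congr rfl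
          (fun n _ => if_congr (by omega : (n+1 = m+1) ↔ (n = m)) rfl rfl)]
        rw [Finset.sum_ite_eq' (Finset.range N) m (fun _ => μ * U (m+1))]
        rw [if_pos (Finset.mem_range.mpr (by omega))]
    have hC : ∑ n ∈ Finset.range N, (if n = j+1 then (-μ * U (j+2)) else 0)
        = -μ * U (j+2) := by
      rw [Finset.sum_ite_eq' (Finset.range N) (j+1) (fun _ => -μ * U (j+2))]
      rcases Nat.lt_or_ge (j+1) N with hc | hc
      · rw [if_pos (Finset.mem_range.mpr hc)]
      · rw [if_neg (by simp only [Finset.mem_range]; omega), hUbig (j+2) (by omega)]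
        ring
    rw [hB, hC] at hmul
    rw [← hmul]
    ring
  have hKey := keyLemma μ hμ N (l:ℕ) l.isLt hN' U hU0 hUbig hrowU
  rw [← hUval i]
  exact hKey ((i:ℕ)+1) (Nat.succ_le_of_lt i.isLt)
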